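/- Fix nonnegative integers n_0, n_1, …, n_j (j ≥ 1) and view each P^ℓ_k(r) = q^{−k·n_{ℓ+1}} ∏_{i=0}^{r-1} (q^{n_{ℓ+1}} − q^i)(q^k − q^i)/(q^r − q^i) as a function of the real variable q ≥ 2. Then there exists exactly one tuple (i_1^*, …, i_j^*) with 0 ≤ i_ℓ^* ≤ n_ℓ for all ℓ such that the product P^{j-1}_{i_{j-1}^*}(n_j − i_j^*) ⋯ P^1_{i_1^*}(n_2 − i_2^*) · P^0_{n_0}(n_1 − i_1^*) tends to 1 as q → ∞; moreover this tuple is given recursively by i_0^* = n_0 and i_ℓ^* = (n_ℓ − i_{ℓ-1}^*)_+ for ℓ = 1, …, j. For every other tuple in the index range, the corresponding product tends to 0. -/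

import Mathlib

open Filter

/-- `P^ℓ_k(r) = q^{−k·N} ∏_{i=0}^{r-1} (q^N − q^i)(q^k − q^i)/(q^r − q^i)` where
`N = n_{ℓ+1}`, viewed as a function of the real variable `q`, with the conventions that the
empty product is `1` and the value is `0` for impossible (negative-`r`) cases; the formula
itself vanishes when `r > min(k, N)`. -/
noncomputable def PR (q : ℝ) (N k : ℕ) (r : ℤ) : ℝ :=
  if 0 ≤ r then
    q ^ (-(k * N : ℤ)) *
      ∏ i ∈ Finset.range r.toNat,
        ((q ^ N - q ^ i) * (q ^ k - q ^ i) / (q ^ r.toNat - q ^ i))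
  else 0

/-- The recursion `i_0^* = n_0`, `i_ℓ^* = (n_ℓ − i_{ℓ-1}^*)_+` (truncated subtraction on `ℕ`
is exactly the positive part). -/
def istar (n : ℕ → ℕ) : ℕ → ℕ
  | 0 => n 0
  | ℓ + 1 => n (ℓ + 1) - istar n ℓ

/-- The product `P^{j-1}_{i_{j-1}}(n_j − i_j) ⋯ P^1_{i_1}(n_2 − i_2) · P^0_{i_0}(n_1 − i_1)`
as a function of the real variable `q`, for a tuple `(i_0, i_1, …, i_j)`. -/
noncomputable def prodP (n : ℕ → ℕ) (j : ℕ) (i : Fin (j + 1) → ℕ) (q : ℝ) : ℝ :=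
  ∏ ℓ : Fin j, PR q (n (ℓ.val + 1)) (i ℓ.castSucc) ((n (ℓ.val + 1) : ℤ) - (i ℓ.succ : ℤ))

/-- Proposition 4.1: there is exactly one tuple `(i_1^*, …, i_j^*)` in the
index range (`i_ℓ ≤ n_ℓ`, with `i_0 = n_0`) for which
`P^{j-1}_{i_{j-1}}(n_j − i_j) ⋯ P^1_{i_1}(n_2 − i_2) P^0_{n_0}(n_1 − i_1) → 1` as the real
number `q → ∞`; it is given by `i_0^* = n_0`, `i_ℓ^* = (n_ℓ − i_{ℓ-1}^*)_+`, and for every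
other tuple in range the product tends to `0`. -/

private lemma PR_cast' (q : ℝ) (N k r : ℕ) :
    (if 0 ≤ ((r : ℤ)) then
      q ^ (-(k * N : ℤ)) *
        ∏ i ∈ Finset.range (r : ℤ).toNat,
          ((q ^ N - q ^ i) * (q ^ k - q ^ i) / (q ^ (r : ℤ).toNat - q ^ i))
    else 0) =
      q ^ (-(k * N : ℤ)) *
        ∏ i ∈ Finset.range r, ((q ^ N - q ^ i) * (q ^ k - q ^ i) / (q ^ r - q ^ i)) := by
  simp

private lemma PR_eq' (N k r : ℕ) (hrN : r ≤ N) (hrk : r ≤ k) {q : ℝ} (hq : 1 < q) :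
    q ^ (-(k * N : ℤ)) *
        ∏ i ∈ Finset.range r, ((q ^ N - q ^ i) * (q ^ k - q ^ i) / (q ^ r - q ^ i)) =
      q ^ (-(((N - r) * (k - r) : ℕ) : ℤ)) *
        ∏ i ∈ Finset.range r,
          ((1 - q ^ i / q ^ N) * (1 - q ^ i / q ^ k) / (1 - q ^ i / q ^ r)) := by
  have hq0 : (0:ℝ) < q := lt_trans one_pos hq
  have hqne : q ≠ 0 := ne_of_gt hq0
  have hNr : q ^ N ≠ 0 := pow_ne_zero _ hqne
  have hkr : q ^ k ≠ 0 := pow_ne_zero _ hqne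
  have hrr : q ^ r ≠ 0 := pow_ne_zero _ hqne
  have hpow : q ^ (N + k - r) * q ^ r = q ^ N * q ^ k := by
    rw [← pow_add, ← pow_add]; congr 1; omega
  have hfac : ∀ i ∈ Finset.range r,
      (q ^ N - q ^ i) * (q ^ k - q ^ i) / (q ^ r - q ^ i) =
        q ^ (N + k - r) *
          ((1 - q ^ i / q ^ N) * (1 - q ^ i / q ^ k) / (1 - q ^ i / q ^ r)) := by
    intro i hi
    rw [Finset.mem_range] at hi
    have hir : q ^ i < q ^ r := pow_lt_pow_right₀ hq hi
    have h1 : q ^ r - q ^ i ≠ 0 := sub_ne_zero.mpr hir.ne'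
    rw [one_sub_div hNr, one_sub_div hkr, one_sub_div hrr]
    rw [div_mul_div_comm, div_div_div_eq, mul_div_assoc']
    rw [div_eq_div_iff h1 (mul_ne_zero (mul_ne_zero hNr hkr) h1)]
    linear_combination (-((q ^ N - q ^ i) * (q ^ k - q ^ i) * (q ^ r - q ^ i))) * hpow
  rw [Finset.prod_congr rfl hfac, Finset.prod_mul_distrib, Finset.prod_const,
    Finset.card_range, ← mul_assoc]
  congr 1
  rw [← pow_mul, ← zpow_natCast q ((N + k - r) * r), ← zpow_add₀ hqne]
  congr 1
  have c1 : ((N + k - r : ℕ) : ℤ) = (N : ℤ) + k - r := by omega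
  have c2 : (((N - r) * (k - r) : ℕ) : ℤ) = ((N : ℤ) - r) * ((k : ℤ) - r) := by
    rw [Nat.cast_mul, Nat.cast_sub hrN, Nat.cast_sub hrk]
  rw [Nat.cast_mul, c1, c2]
  ring

private lemma PR_tendsto (N k r : ℕ) (hrN : r ≤ N) (hrk : r ≤ k) :
    Tendsto (fun q => PR q N k (r : ℤ)) atTop
      (nhds (if r = min k N then (1:ℝ) else 0)) := by
  have hEq : (fun q => PR q N k (r : ℤ)) =ᶠ[atTop]
      fun q => q ^ (-(((N - r) * (k - r) : ℕ) : ℤ)) *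
        ∏ i ∈ Finset.range r,
          ((1 - q ^ i / q ^ N) * (1 - q ^ i / q ^ k) / (1 - q ^ i / q ^ r)) := by
    filter_upwards [eventually_gt_atTop (1 : ℝ)] with q hq
    rw [PR, PR_cast', PR_eq' N k r hrN hrk hq]
  rw [tendsto_congr' hEq]
  have hprod : Tendsto
      (fun q : ℝ => ∏ i ∈ Finset.range r,
        ((1 - q ^ i / q ^ N) * (1 - q ^ i / q ^ k) / (1 - q ^ i / q ^ r)))
      atTop (nhds 1) := by
    have h : Tendsto
        (fun q : ℝ => ∏ i ∈ Finset.range r,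
          ((1 - q ^ i / q ^ N) * (1 - q ^ i / q ^ k) / (1 - q ^ i / q ^ r)))
        atTop (nhds (∏ _i ∈ Finset.range r, (1:ℝ))) := by
      apply tendsto_finset_prod
      intro i hi
      rw [Finset.mem_range] at hi
      have h1 : Tendsto (fun q : ℝ => q ^ i / q ^ N) atTop (nhds 0) :=
        tendsto_pow_div_pow_atTop_zero (lt_of_lt_of_le hi hrN)
      have h2 : Tendsto (fun q : ℝ => q ^ i / q ^ k) atTop (nhds 0) :=
        tendsto_pow_div_pow_atTop_zero (lt_of_lt_of_le hi hrk)
      have h3 : Tendsto (fun q : ℝ => q ^ i / q ^ r) atTop (nhds 0) :=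
        tendsto_pow_div_pow_atTop_zero hi
      have hnum : Tendsto
          (fun q : ℝ => (1 - q ^ i / q ^ N) * (1 - q ^ i / q ^ k)) atTop (nhds 1) := by
        simpa using ((tendsto_const_nhds (x := (1:ℝ))).sub h1).mul
          ((tendsto_const_nhds (x := (1:ℝ))).sub h2)
      have hden : Tendsto (fun q : ℝ => 1 - q ^ i / q ^ r) atTop (nhds 1) := by
        simpa using (tendsto_const_nhds (x := (1:ℝ))).sub h3
      have h4 := hnum.div hden one_ne_zero
      rw [div_one] at h4
      exact h4
    simpa using h
  have hpow : Tendsto (fun q : ℝ => q ^ (-(((N - r) * (k - r) : ℕ) : ℤ))) atTop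
      (nhds (if r = min k N then (1:ℝ) else 0)) := by
    by_cases hmin : r = min k N
    · have h0 : ((N - r) * (k - r) : ℕ) = 0 := by
        have : N - r = 0 ∨ k - r = 0 := by omega
        rcases this with h | h <;> simp [h]
      rw [if_pos hmin, h0]
      simpa using tendsto_const_nhds (x := (1:ℝ)) (f := atTop)
    · rw [if_neg hmin]
      apply tendsto_zpow_atTop_zero
      have : 0 < (N - r) * (k - r) := Nat.mul_pos (by omega) (by omega)
      omega
  simpa using hpow.mul hprod

private lemma PR_zero (q : ℝ) (N k : ℕ) {r : ℕ} (h : k < r) : PR q N k (r : ℤ) = 0 := by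
  rw [PR, PR_cast', Finset.prod_eq_zero (Finset.mem_range.mpr h), mul_zero]
  simp

private lemma factor_tendsto (N k m : ℕ) (hm : m ≤ N) :
    Tendsto (fun q => PR q N k ((N : ℤ) - m)) atTop
      (nhds (if N - m = min k N then (1:ℝ) else 0)) := by
  have hcast : ((N : ℤ) - m) = ((N - m : ℕ) : ℤ) := by omega
  simp only [hcast]
  by_cases hrk : N - m ≤ k
  · exact PR_tendsto N k (N - m) (Nat.sub_le _ _) hrk
  · have hne : ¬ (N - m = min k N) := by omega
    rw [if_neg hne]
    have : (fun q : ℝ => PR q N k ((N - m : ℕ) : ℤ)) = fun _ => 0 := by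
      funext q; exact PR_zero q N k (lt_of_not_ge hrk)
    rw [this]
    exact tendsto_const_nhds

private lemma prodP_tendsto (n : ℕ → ℕ) (j : ℕ) (i : Fin (j + 1) → ℕ)
    (hle : ∀ ℓ : Fin (j + 1), i ℓ ≤ n ℓ.val) :
    Tendsto (prodP n j i) atTop
      (nhds (∏ ℓ : Fin j,
        if n (ℓ.val + 1) - i ℓ.succ = min (i ℓ.castSucc) (n (ℓ.val + 1)) then (1:ℝ) else 0)) := by
  unfold prodP
  apply tendsto_finset_prod
  intro ℓ _
  exact factor_tendsto (n (ℓ.val + 1)) (i ℓ.castSucc) (i ℓ.succ) (hle ℓ.succ)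

private lemma cond_iff (n : ℕ → ℕ) (j : ℕ) (i : Fin (j + 1) → ℕ)
    (h0 : i 0 = n 0) (hle : ∀ ℓ : Fin (j + 1), i ℓ ≤ n ℓ.val) :
    (∀ ℓ : Fin (j + 1), i ℓ = istar n ℓ.val) ↔
      (∀ ℓ : Fin j, n (ℓ.val + 1) - i ℓ.succ = min (i ℓ.castSucc) (n (ℓ.val + 1))) := by
  constructor
  · intro h ℓ
    have h1 := h ℓ.succ
    have h2 := h ℓ.castSucc
    rw [Fin.val_succ] at h1
    rw [Fin.coe_castSucc] at h2
    rw [h1, h2]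
    simp only [istar]
    omega
  · intro h ℓ
    have key : ∀ m, (hm : m < j + 1) → i ⟨m, hm⟩ = istar n m := by
      intro m
      induction m with
      | zero =>
        intro hm
        have : (⟨0, hm⟩ : Fin (j + 1)) = 0 := by ext; simp
        rw [this, h0]; rfl
      | succ m ih =>
        intro hm
        have hmj : m < j := by omega
        have hm' : m < j + 1 := by omega
        have hc := h ⟨m, hmj⟩
        have e1 : (⟨m, hmj⟩ : Fin j).succ = (⟨m + 1, hm⟩ : Fin (j + 1)) := rfl
        have e2 : (⟨m, hmj⟩ : Fin j).castSucc = (⟨m, hm'⟩ : Fin (j + 1)) := rfl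
        rw [e1, e2] at hc
        rw [ih hm'] at hc
        have hle' := hle ⟨m + 1, hm⟩
        simp only [Fin.val_mk] at hc hle' ⊢
        simp only [istar]
        omega
    exact key ℓ.val ℓ.isLt

private lemma istar_le (n : ℕ → ℕ) : ∀ m, istar n m ≤ n m := by
  intro m
  cases m with
  | zero => exact le_refl _
  | succ m => exact Nat.sub_le _ _

theorem test_key (j : ℕ) (n : ℕ → ℕ) (i : Fin (j + 1) → ℕ) (h0 : i 0 = n 0)
    (hle : ∀ ℓ : Fin (j + 1), i ℓ ≤ n ℓ.val) :
    ((∀ ℓ : Fin (j + 1), i ℓ = istar n ℓ.val) →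
        Tendsto (prodP n j i) atTop (nhds 1)) ∧
    ((¬ ∀ ℓ : Fin (j + 1), i ℓ = istar n ℓ.val) →
        Tendsto (prodP n j i) atTop (nhds 0)) := by
  have hT := prodP_tendsto n j i hle
  constructor
  · intro hc
    have hcond := (cond_iff n j i h0 hle).1 hc
    have hP : (∏ ℓ : Fin j,
        if n (ℓ.val + 1) - i ℓ.succ = min (i ℓ.castSucc) (n (ℓ.val + 1)) then (1:ℝ) else 0) = 1 :=
      Finset.prod_eq_one fun ℓ _ => if_pos (hcond ℓ)
    rwa [hP] at hT
  · intro hc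
    rw [cond_iff n j i h0 hle] at hc
    push_neg at hc
    obtain ⟨ℓ, hℓ⟩ := hc
    have hP : (∏ ℓ : Fin j,
        if n (ℓ.val + 1) - i ℓ.succ = min (i ℓ.castSucc) (n (ℓ.val + 1)) then (1:ℝ) else 0) = 0 :=
      Finset.prod_eq_zero (Finset.mem_univ ℓ) (if_neg hℓ)
    rwa [hP] at hT

theorem unique_tuple_tendsto_one (j : ℕ) (hj : 1 ≤ j) (n : ℕ → ℕ) :
    (∃! i : Fin (j + 1) → ℕ,
      (i 0 = n 0 ∧ ∀ ℓ : Fin (j + 1), i ℓ ≤ n ℓ.val) ∧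
        Tendsto (prodP n j i) atTop (nhds 1)) ∧
    (∀ i : Fin (j + 1) → ℕ, i 0 = n 0 → (∀ ℓ : Fin (j + 1), i ℓ ≤ n ℓ.val) →
      ((∀ ℓ : Fin (j + 1), i ℓ = istar n ℓ.val) →
          Tendsto (prodP n j i) atTop (nhds 1)) ∧
      ((¬ ∀ ℓ : Fin (j + 1), i ℓ = istar n ℓ.val) →
          Tendsto (prodP n j i) atTop (nhds 0))) := by
  have h0star : (fun ℓ : Fin (j + 1) => istar n ℓ.val) 0 = n 0 := by
    simp only [Fin.val_zero]; rfl
  have hlestar : ∀ ℓ : Fin (j + 1), (fun ℓ : Fin (j + 1) => istar n ℓ.val) ℓ ≤ n ℓ.val :=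
    fun ℓ => istar_le n ℓ.val
  constructor
  · refine ⟨fun ℓ => istar n ℓ.val, ⟨⟨h0star, hlestar⟩, ?_⟩, ?_⟩
    · exact (test_key j n _ h0star hlestar).1 fun ℓ => rfl
    · rintro y ⟨⟨hy0, hyle⟩, hyT⟩
      by_cases hc : ∀ ℓ : Fin (j + 1), y ℓ = istar n ℓ.val
      · funext ℓ; exact hc ℓ
      · exfalso
        have h0' := (test_key j n y hy0 hyle).2 hc
        exact one_ne_zero (tendsto_nhds_unique hyT h0')
  · intro i h0 hle
    exact test_key j n i h0 hle
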